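/- Let $\gamma \geq 0$ and $e, p \in \mathbb{R}$ with $(e,p) \neq (0,0)$, and set $T = \frac{e^{\gamma}}{e^2 + p^2 e^{2\gamma}}$, $S = (p^2 - e^2) T^2$, $P = 2 e p T^2$. Let $L = -\frac{1}{2}(S\cosh\gamma + \sinh\gamma\sqrt{S^2+P^2})$, $L_S = -\frac{1}{2}\left(\cosh\gamma + \sinh\gamma\,\frac{p^2-e^2}{p^2+e^2}\right)$, and $L_P = -\sinh\gamma\,\frac{e p}{p^2+e^2}$ (these are the ModMax Lagrangian and its partial derivatives $\partial_S L$, $\partial_P L$ evaluated at $(S,P)$). Then both Bertotti--Robinson constraint equations hold with $T_0 = T_1 = T$: $T = -2L - 4 e^2 T^2 L_S + 2 P L_P$ and $T = 2L - 4 p^2 T^2 L_S - 2 P L_P$. -/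

import Mathlib

/-- Verification of the ModMax row of Table I: `T₀ = T₁ = e^γ/(e² + p² e^{2γ})`
solves both Bertotti--Robinson constraint equations. -/
theorem modMax_bertotti_robinson_row
    (γ e p : ℝ) (hγ : 0 ≤ γ) (hep : (e, p) ≠ (0, 0))
    (T S P L LS LP : ℝ)
    (hT : T = Real.exp γ / (e ^ 2 + p ^ 2 * Real.exp (2 * γ)))
    (hS : S = (p ^ 2 - e ^ 2) * T ^ 2)
    (hP : P = 2 * e * p * T ^ 2)
    (hL : L = -(1 / 2) * (S * Real.cosh γ + Real.sinh γ * Real.sqrt (S ^ 2 + P ^ 2)))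
    (hLS : LS = -(1 / 2) * (Real.cosh γ + Real.sinh γ * ((p ^ 2 - e ^ 2) / (p ^ 2 + e ^ 2))))
    (hLP : LP = -Real.sinh γ * (e * p / (p ^ 2 + e ^ 2))) :
    T = -2 * L - 4 * e ^ 2 * T ^ 2 * LS + 2 * P * LP ∧
    T = 2 * L - 4 * p ^ 2 * T ^ 2 * LS - 2 * P * LP := by
  have hq : 0 < p ^ 2 + e ^ 2 := by
    rcases (by simpa [Prod.ext_iff] using hep : ¬ (e = 0 ∧ p = 0)) with h
    rcases eq_or_ne e 0 with he | he
    · have hp : p ≠ 0 := fun hp => h ⟨he, hp⟩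
      positivity
    · positivity
  have hsqrt : Real.sqrt (S ^ 2 + P ^ 2) = (p ^ 2 + e ^ 2) * T ^ 2 := by
    rw [hS, hP]
    rw [show ((p ^ 2 - e ^ 2) * T ^ 2) ^ 2 + (2 * e * p * T ^ 2) ^ 2
        = ((p ^ 2 + e ^ 2) * T ^ 2) ^ 2 by ring]
    exact Real.sqrt_sq (by positivity)
  have hE : Real.exp γ ≠ 0 := Real.exp_ne_zero γ
  have hD : e ^ 2 + p ^ 2 * Real.exp (2 * γ) ≠ 0 := by
    rcases (by simpa [Prod.ext_iff] using hep : ¬ (e = 0 ∧ p = 0)) with h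
    have hEpos : 0 < Real.exp (2 * γ) := Real.exp_pos _
    rcases eq_or_ne e 0 with he | he
    · have hp : p ≠ 0 := fun hp => h ⟨he, hp⟩
      positivity
    · positivity
  have h2 : Real.exp (2 * γ) = Real.exp γ ^ 2 := by
    rw [← Real.exp_nat_mul]; norm_num [mul_comm]
  have hcosh : Real.cosh γ = (Real.exp γ + 1 / Real.exp γ) / 2 := by
    rw [Real.cosh_eq, Real.exp_neg, inv_eq_one_div]
  have hsinh : Real.sinh γ = (Real.exp γ - 1 / Real.exp γ) / 2 := by
    rw [Real.sinh_eq, Real.exp_neg, inv_eq_one_div]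
  rw [h2] at hT hD
  subst hL hLS hLP hS hP hT
  rw [hsqrt] at *
  constructor <;>
  · simp only [hcosh, hsinh]
    field_simp [hq.ne', hD, show p ^ 2 * Real.exp γ ^ 2 + e ^ 2 ≠ 0 by rwa [add_comm]]
    have hD2 : e ^ 2 + Real.exp γ ^ 2 * p ^ 2 ≠ 0 := by rw [mul_comm]; exact hD
    rw [div_eq_div_iff hD2 (pow_ne_zero 2 hD2)]
    ring
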